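/- A₁·A₃ < π²/6, i.e., the product of ∏_{p ≡ 1 (mod 4)} (1 + 1/(p(p−1))) and ∏_{p ≡ 3 (mod 4)} (1 + 1/(p(p−2))) over primes p is strictly less than π²/6. -/

import Mathlib

/-- `A₁ := ∏_{p ≡ 1 (mod 4)} (1 + 1/(p(p-1)))`. -/
noncomputable def Aone : ℝ :=
  ∏' p : {p : ℕ // p.Prime ∧ p % 4 = 1}, (1 + 1 / ((p : ℕ) * ((p : ℕ) - 1) : ℝ))

/-- `A₃ := ∏_{p ≡ 3 (mod 4)} (1 + 1/(p(p-2)))`. -/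
noncomputable def Athree : ℝ :=
  ∏' p : {p : ℕ // p.Prime ∧ p % 4 = 3}, (1 + 1 / ((p : ℕ) * ((p : ℕ) - 2) : ℝ))

/- Auxiliary development. -/

/-- If `1 ≤ f i ≤ exp (b i)` with `b` summable, then `f` has a product `exp S` with
`S ≤ ∑' b`. -/
lemma tprod_exp_bound {ι : Type*} (f b : ι → ℝ) (h1 : ∀ i, 1 ≤ f i)
    (hfb : ∀ i, f i ≤ Real.exp (b i)) (hb : Summable b) :
    ∃ S : ℝ, HasProd f (Real.exp S) ∧ S ≤ ∑' i, b i := by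
  have hpos : ∀ i, 0 < f i := fun i => lt_of_lt_of_le one_pos (h1 i)
  have hlog0 : ∀ i, 0 ≤ Real.log (f i) := fun i => Real.log_nonneg (h1 i)
  have hlogle : ∀ i, Real.log (f i) ≤ b i := fun i => by
    calc Real.log (f i) ≤ Real.log (Real.exp (b i)) :=
          Real.log_le_log (hpos i) (hfb i)
      _ = b i := Real.log_exp _
  have hsum : Summable fun i => Real.log (f i) :=
    Summable.of_nonneg_of_le hlog0 hlogle hb
  refine ⟨∑' i, Real.log (f i), ?_, Summable.tsum_le_tsum hlogle hsum hb⟩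
  have := hsum.hasSum.rexp
  refine this.congr_fun fun i => ?_
  simp [Real.exp_log (hpos i)]

/-- the telescoping majorant `1/((2k+5)(2k+3))`. -/
noncomputable def ee : ℕ → ℝ := fun k => 1 / ((2*k+5)*(2*k+3))

lemma ee_nonneg (k : ℕ) : 0 ≤ ee k := by unfold ee; positivity

lemma sum_ee (n : ℕ) : ∑ k ∈ Finset.range n, ee k = 1/2 * (1/3 - 1/(2*n+3)) := by
  induction n with
  | zero => norm_num
  | succ n ih =>
    rw [Finset.sum_range_succ, ih]
    unfold ee
    have h1 : (2*(n:ℝ)+5) ≠ 0 := by positivity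
    have h2 : (2*(n:ℝ)+3) ≠ 0 := by positivity
    push_cast
    field_simp
    ring

lemma sum_ee_le (n : ℕ) : ∑ k ∈ Finset.range n, ee k ≤ 1/6 := by
  rw [sum_ee]
  have : (0:ℝ) ≤ 1/(2*(n:ℝ)+3) := by positivity
  linarith

lemma summable_ee : Summable ee := summable_of_sum_range_le ee_nonneg sum_ee_le
lemma tsum_ee_le : ∑' k, ee k ≤ 1/6 := Real.tsum_le_of_sum_range_le ee_nonneg sum_ee_le

noncomputable def E1 : ℕ → ℝ := fun k => if Even k then ee k else 0
noncomputable def E3 : ℕ → ℝ := fun k => if Even k then 0 else ee k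

lemma E1_nonneg (k : ℕ) : 0 ≤ E1 k := by unfold E1; split; exacts [ee_nonneg k, le_refl 0]
lemma E3_nonneg (k : ℕ) : 0 ≤ E3 k := by unfold E3; split; exacts [le_refl 0, ee_nonneg k]
lemma E1_le (k : ℕ) : E1 k ≤ ee k := by unfold E1; split; exacts [le_refl _, ee_nonneg k]
lemma E3_le (k : ℕ) : E3 k ≤ ee k := by unfold E3; split; exacts [ee_nonneg k, le_refl _]

lemma summable_E1 : Summable E1 := Summable.of_nonneg_of_le E1_nonneg E1_le summable_ee
lemma summable_E3 : Summable E3 := Summable.of_nonneg_of_le E3_nonneg E3_le summable_ee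

lemma tsum_E1_add_E3 : (∑' k, E1 k) + (∑' k, E3 k) ≤ 1/6 := by
  rw [← Summable.tsum_add summable_E1 summable_E3]
  have he : (fun k => E1 k + E3 k) = ee := by
    funext k; unfold E1 E3; by_cases h : Even k <;> simp [h]
  rw [he]
  exact tsum_ee_le

lemma four_thirds_le_exp : (4:ℝ)/3 ≤ Real.exp (3/10) := by
  have h10 : Real.exp (3/10) ^ 10 = Real.exp 1 ^ 3 := by
    rw [← Real.exp_nat_mul, ← Real.exp_nat_mul]; norm_num
  have h : ((4:ℝ)/3) ^ 10 < Real.exp (3/10) ^ 10 := by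
    rw [h10]
    calc ((4:ℝ)/3) ^ 10 < 2.7182818283 ^ 3 := by norm_num
      _ < Real.exp 1 ^ 3 := by
          apply pow_lt_pow_left₀ Real.exp_one_gt_d9 (by norm_num)
          norm_num
  exact le_of_lt (lt_of_pow_lt_pow_left₀ 10 (Real.exp_pos _).le h)

lemma exp_lt_pi6 : Real.exp (7/15) < Real.pi ^ 2 / 6 := by
  have h30 : Real.exp (7/15) ^ 30 = Real.exp 1 ^ 14 := by
    rw [← Real.exp_nat_mul, ← Real.exp_nat_mul]; norm_num
  have key : Real.exp (7/15) ^ 30 < (Real.pi ^ 2 / 6) ^ 30 := by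
    rw [h30]
    have hpi2 : (3.141592:ℝ)^2/6 ≤ Real.pi^2/6 := by nlinarith [Real.pi_gt_d6]
    calc Real.exp 1 ^ 14 < 2.7182818286 ^ 14 := by
          apply pow_lt_pow_left₀ Real.exp_one_lt_d9 (Real.exp_pos 1).le
          norm_num
      _ ≤ ((3.141592:ℝ) ^ 2 / 6) ^ 30 := by norm_num
      _ ≤ (Real.pi ^ 2 / 6) ^ 30 := pow_le_pow_left₀ (by positivity) hpi2 30
  exact lt_of_pow_lt_pow_left₀ 30 (by positivity) key

/- Family-specific sums. -/

section families

abbrev P1 : Type := {p : ℕ // p.Prime ∧ p % 4 = 1}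
abbrev P3 : Type := {p : ℕ // p.Prime ∧ p % 4 = 3}

noncomputable def bOne : P1 → ℝ := fun p => 1 / ((p : ℕ) * ((p : ℕ) - 1) : ℝ)
noncomputable def bThree : P3 → ℝ :=
  fun p => if (p : ℕ) = 3 then 3/10 else 1 / ((p : ℕ) * ((p : ℕ) - 2) : ℝ)

lemma P1_ge_5 (p : P1) : 5 ≤ (p : ℕ) := by
  have h2 := p.2.1.two_le
  have h4 := p.2.2
  omega

lemma P3_ge_3 (p : P3) : 3 ≤ (p : ℕ) := by
  have h4 := p.2.2
  omega

lemma P3_ge_7 (p : P3) (h : (p : ℕ) ≠ 3) : 7 ≤ (p : ℕ) := by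
  have h4 := p.2.2
  omega

noncomputable def i1 : P1 → ℕ := fun p => ((p : ℕ) - 5) / 2
noncomputable def i3 : P3 → ℕ := fun p => ((p : ℕ) - 5) / 2

lemma i1_spec (p : P1) : (p : ℕ) = 2 * i1 p + 5 := by
  have h5 := P1_ge_5 p
  have h4 := p.2.2
  unfold i1
  omega

lemma i1_inj : Function.Injective i1 := fun p q h => by
  have hp := i1_spec p
  have hq := i1_spec q
  rw [h] at hp
  exact Subtype.ext (hp.trans hq.symm)

lemma i1_even (p : P1) : Even (i1 p) := by
  have h5 := i1_spec p
  have h4 := p.2.2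
  refine ⟨i1 p / 2, ?_⟩
  omega

lemma i3_spec (p : P3) (h : (p : ℕ) ≠ 3) : (p : ℕ) = 2 * i3 p + 5 := by
  have h7 := P3_ge_7 p h
  have h4 := p.2.2
  unfold i3
  omega

lemma i3_three (p : P3) (h : (p : ℕ) = 3) : i3 p = 0 := by unfold i3; omega

lemma i3_inj : Function.Injective i3 := fun p q h => by
  by_cases hp3 : (p : ℕ) = 3
  · by_cases hq3 : (q : ℕ) = 3
    · exact Subtype.ext (hp3.trans hq3.symm)
    · exfalso
      have h1 := i3_three p hp3
      have h2 := i3_spec q hq3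
      have h7 := P3_ge_7 q hq3
      rw [h] at h1
      omega
  · by_cases hq3 : (q : ℕ) = 3
    · exfalso
      have h1 := i3_three q hq3
      have h2 := i3_spec p hp3
      have h7 := P3_ge_7 p hp3
      rw [← h] at h1
      omega
    · have h1 := i3_spec p hp3
      have h2 := i3_spec q hq3
      rw [h] at h1
      exact Subtype.ext (h1.trans h2.symm)

lemma i3_odd (p : P3) (h : (p : ℕ) ≠ 3) : ¬ Even (i3 p) := by
  have h5 := i3_spec p h
  have h4 := p.2.2
  intro ⟨m, hm⟩
  omega

lemma bOne_le (p : P1) : bOne p ≤ E1 (i1 p) := by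
  have h5 := i1_spec p
  have hk : ((p : ℕ) : ℝ) = 2 * (i1 p : ℝ) + 5 := by exact_mod_cast congrArg (Nat.cast : ℕ → ℝ) h5
  rw [E1, if_pos (i1_even p)]
  unfold bOne ee
  rw [hk]
  have h1 : (0:ℝ) < (2 * (i1 p : ℝ) + 5) * (2 * (i1 p : ℝ) + 3) := by positivity
  apply one_div_le_one_div_of_le h1
  nlinarith [Nat.cast_nonneg (α := ℝ) (i1 p)]

lemma bThree_nonneg (p : P3) : 0 ≤ bThree p := by
  unfold bThree
  split
  · norm_num
  · have h3 := P3_ge_3 p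
    have : (3:ℝ) ≤ ((p : ℕ) : ℝ) := by exact_mod_cast h3
    have : (0:ℝ) < ((p : ℕ) : ℝ) * (((p : ℕ) : ℝ) - 2) := by nlinarith
    positivity

lemma bOne_nonneg (p : P1) : 0 ≤ bOne p := by
  unfold bOne
  have h5 := P1_ge_5 p
  have : (5:ℝ) ≤ ((p : ℕ) : ℝ) := by exact_mod_cast h5
  have : (0:ℝ) < ((p : ℕ) : ℝ) * (((p : ℕ) : ℝ) - 1) := by nlinarith
  positivity

noncomputable def bThree' : P3 → ℝ :=
  fun p => if (p : ℕ) = 3 then 0 else 1 / ((p : ℕ) * ((p : ℕ) - 2) : ℝ)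

lemma bThree'_nonneg (p : P3) : 0 ≤ bThree' p := by
  unfold bThree'
  split
  · norm_num
  · have h3 := P3_ge_3 p
    have : (3:ℝ) ≤ ((p : ℕ) : ℝ) := by exact_mod_cast h3
    have : (0:ℝ) < ((p : ℕ) : ℝ) * (((p : ℕ) : ℝ) - 2) := by nlinarith
    positivity

lemma bThree'_le (p : P3) : bThree' p ≤ E3 (i3 p) := by
  by_cases h : (p : ℕ) = 3
  · rw [bThree', if_pos h]
    exact E3_nonneg _
  · have h5 := i3_spec p h
    have hk : ((p : ℕ) : ℝ) = 2 * (i3 p : ℝ) + 5 := by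
      exact_mod_cast congrArg (Nat.cast : ℕ → ℝ) h5
    rw [E3, if_neg (i3_odd p h), bThree', if_neg h]
    unfold ee
    rw [hk]
    have h32 : (2 * ((i3 p : ℕ) : ℝ) + 5) - 2 = 2 * ((i3 p : ℕ) : ℝ) + 3 := by ring
    rw [h32]

/-- Summability and bound for `bOne`. -/
lemma summable_bOne : Summable bOne :=
  Summable.of_nonneg_of_le bOne_nonneg bOne_le (summable_E1.comp_injective i1_inj)

lemma tsum_bOne_le : ∑' p, bOne p ≤ ∑' k, E1 k :=
  Summable.tsum_le_tsum_of_inj i1 i1_inj (fun k _ => E1_nonneg k) bOne_le summable_bOne summable_E1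

lemma summable_bThree' : Summable bThree' :=
  Summable.of_nonneg_of_le bThree'_nonneg bThree'_le (summable_E3.comp_injective i3_inj)

lemma tsum_bThree'_le : ∑' p, bThree' p ≤ ∑' k, E3 k :=
  Summable.tsum_le_tsum_of_inj i3 i3_inj (fun k _ => E3_nonneg k) bThree'_le summable_bThree' summable_E3

/-- The point `3` as an element of `P3`. -/
def p3 : P3 := ⟨3, by norm_num⟩

noncomputable def delta3 : P3 → ℝ := fun p => if p = p3 then 3/10 else 0

lemma hasSum_delta3 : HasSum delta3 (3/10) := hasSum_ite_eq p3 (3/10 : ℝ)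

lemma bThree_eq : bThree = fun p => delta3 p + bThree' p := by
  funext p
  unfold bThree delta3 bThree'
  by_cases h : (p : ℕ) = 3
  · have : p = p3 := Subtype.ext h
    simp [h, this, p3]
  · have : p ≠ p3 := fun hc => h (congrArg Subtype.val hc)
    simp [h, this]

lemma summable_bThree : Summable bThree := by
  rw [bThree_eq]
  exact hasSum_delta3.summable.add summable_bThree'

lemma tsum_bThree_le : ∑' p, bThree p ≤ 3/10 + ∑' k, E3 k := by
  rw [bThree_eq, Summable.tsum_add hasSum_delta3.summable summable_bThree', hasSum_delta3.tsum_eq]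
  exact add_le_add_right tsum_bThree'_le _

end families

/-- `A₁ · A₃ < π² / 6`. -/
theorem stmt16 : Aone * Athree < Real.pi ^ 2 / 6 := by
  -- bound the first product
  obtain ⟨S1, hP1, hS1⟩ := tprod_exp_bound
      (fun p : {p : ℕ // p.Prime ∧ p % 4 = 1} => (1 + 1 / ((p : ℕ) * ((p : ℕ) - 1) : ℝ)))
      bOne
      (fun p => by
        have := bOne_nonneg p
        unfold bOne at this
        linarith)
      (fun p => by
        have h := Real.add_one_le_exp (bOne p)
        unfold bOne at h ⊢
        linarith)
      summable_bOne
  -- bound the second product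
  obtain ⟨S3, hP3, hS3⟩ := tprod_exp_bound
      (fun p : {p : ℕ // p.Prime ∧ p % 4 = 3} => (1 + 1 / ((p : ℕ) * ((p : ℕ) - 2) : ℝ)))
      bThree
      (fun p => by
        have h3 := P3_ge_3 p
        have : (3:ℝ) ≤ ((p : ℕ) : ℝ) := by exact_mod_cast h3
        have hpos : (0:ℝ) < ((p : ℕ) : ℝ) * (((p : ℕ) : ℝ) - 2) := by nlinarith
        have : (0:ℝ) ≤ 1 / (((p : ℕ) : ℝ) * (((p : ℕ) : ℝ) - 2)) := by positivity
        linarith)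
      (fun p => by
        by_cases h : (p : ℕ) = 3
        · rw [bThree, if_pos h]
          have h3 : ((p : ℕ) : ℝ) = 3 := by exact_mod_cast h
          show (1 : ℝ) + 1 / (((p : ℕ) : ℝ) * (((p : ℕ) : ℝ) - 2)) ≤ Real.exp (3/10)
          rw [h3]
          calc (1 : ℝ) + 1 / (3 * (3 - 2)) = 4/3 := by norm_num
            _ ≤ Real.exp (3/10) := four_thirds_le_exp
        · rw [bThree, if_neg h]
          have hh := Real.add_one_le_exp (1 / (((p : ℕ) : ℝ) * (((p : ℕ) : ℝ) - 2)))
          linarith)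
      summable_bThree
  have hA1 : Aone = Real.exp S1 := hP1.tprod_eq
  have hA3 : Athree = Real.exp S3 := hP3.tprod_eq
  rw [hA1, hA3, ← Real.exp_add]
  have hsum : S1 + S3 ≤ 7/15 := by
    have h1 : S1 ≤ ∑' k, E1 k := hS1.trans tsum_bOne_le
    have h3 : S3 ≤ 3/10 + ∑' k, E3 k := hS3.trans tsum_bThree_le
    have := tsum_E1_add_E3
    linarith
  calc Real.exp (S1 + S3) ≤ Real.exp (7/15) := Real.exp_le_exp.2 hsum
    _ < Real.pi ^ 2 / 6 := exp_lt_pi6
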